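/- Let X, Y be Hilbert spaces, A ∈ B(X,Y), T a closed subspace of X, and S a closed subspace of Y. Suppose there exists a bounded operator G ∈ B(Y,X) with GAG = G, R(G) = T, N(G) = S (i.e., the outer inverse A_{T,S}^{(2)} exists). Then A_{T,S}^{(2)} = (P_{S^⊥} A P_T)⁺, the Moore–Penrose inverse of P_{S^⊥} A P_T, and moreover R((P_{S^⊥} A P_T)⁺) = T and N((P_{S^⊥} A P_T)⁺) = S. -/

import Mathlib

noncomputable section

open ContinuousLinearMap

/-- δ(M,N) = sup{dist(x,N) : x ∈ M, ‖x‖ = 1}, with sSup ∅ = 0 covering M = {0}. -/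
def gapDelta {H : Type*} [NormedAddCommGroup H] (M N : Set H) : ℝ :=
  sSup ((fun x => Metric.infDist x N) '' {x | x ∈ M ∧ ‖x‖ = 1})

/-- The gap δ̂(M,N) = max{δ(M,N), δ(N,M)}. -/
def gapHat {H : Type*} [NormedAddCommGroup H] (M N : Set H) : ℝ :=
  max (gapDelta M N) (gapDelta N M)

/-- Orthogonal projection onto a closed subspace, as an operator H →L[ℂ] H. -/
def projCLM {H : Type*} [NormedAddCommGroup H] [InnerProductSpace ℂ H] [CompleteSpace H]
    (K : Submodule ℂ H) (hK : IsClosed (K : Set H)) : H →L[ℂ] H :=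
  haveI := hK.completeSpace_coe
  K.subtypeL.comp (K.orthogonalProjectionOnto)

/-- G is the outer inverse A_{T,S}^{(2)}: GAG = G, R(G) = T, N(G) = S. -/
def IsOuterInv {X Y : Type*} [NormedAddCommGroup X] [NormedSpace ℂ X]
    [NormedAddCommGroup Y] [NormedSpace ℂ Y]
    (A : X →L[ℂ] Y) (T : Submodule ℂ X) (S : Submodule ℂ Y) (G : Y →L[ℂ] X) : Prop :=
  G ∘L (A ∘L G) = G ∧ LinearMap.range (G : Y →ₗ[ℂ] X) = T ∧ LinearMap.ker (G : Y →ₗ[ℂ] X) = S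

/-- B is the Moore–Penrose inverse of A. -/
def IsMPInv {X Y : Type*} [NormedAddCommGroup X] [InnerProductSpace ℂ X] [CompleteSpace X]
    [NormedAddCommGroup Y] [InnerProductSpace ℂ Y] [CompleteSpace Y]
    (A : X →L[ℂ] Y) (B : Y →L[ℂ] X) : Prop :=
  A ∘L (B ∘L A) = A ∧ B ∘L (A ∘L B) = B ∧
  adjoint (A ∘L B) = A ∘L B ∧ adjoint (B ∘L A) = B ∘L A

variable {X Y : Type*} [NormedAddCommGroup X] [InnerProductSpace ℂ X] [CompleteSpace X]
  [NormedAddCommGroup Y] [InnerProductSpace ℂ Y] [CompleteSpace Y]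
theorem stmt_4 (A : X →L[ℂ] Y) (T : Submodule ℂ X) (S : Submodule ℂ Y)
    (hT : IsClosed (T : Set X)) (hS : IsClosed (S : Set Y))
    (G : Y →L[ℂ] X) (hG : IsOuterInv A T S G)
    (B : Y →L[ℂ] X)
    (hB : IsMPInv (projCLM Sᗮ (Submodule.isClosed_orthogonal S) ∘L (A ∘L projCLM T hT)) B) :
    G = B ∧ LinearMap.range (B : Y →ₗ[ℂ] X) = T ∧ LinearMap.ker (B : Y →ₗ[ℂ] X) = S := by
  haveI := hT.completeSpace_coe
  haveI := hS.completeSpace_coe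
  haveI := (Submodule.isClosed_orthogonal S).completeSpace_coe
  obtain ⟨hGAG, hGr, hGk⟩ := hG
  set P : X →L[ℂ] X := projCLM T hT with hPdef
  set Q : Y →L[ℂ] Y := projCLM Sᗮ (Submodule.isClosed_orthogonal S) with hQdef
  set M : X →L[ℂ] Y := Q ∘L (A ∘L P) with hMdef
  obtain ⟨b1, b2, b3, b4⟩ := hB
  -- pointwise facts about the projections
  have hPapp : ∀ x, P x = (T.orthogonalProjectionOnto x : X) := fun _ => rfl
  have hQapp : ∀ y, Q y = (Sᗮ.orthogonalProjectionOnto y : Y) := fun _ => rfl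
  have hPT : ∀ x ∈ T, P x = x := fun x hx => by
    rw [hPapp]; exact Submodule.starProjection_eq_self_iff.mpr hx
  have hQS : ∀ y ∈ Sᗮ, Q y = y := fun y hy => by
    rw [hQapp]; exact Submodule.starProjection_eq_self_iff.mpr hy
  have hsubS : ∀ y : Y, y - Q y ∈ S := fun y => by
    have h := Submodule.sub_starProjection_mem_orthogonal (K := Sᗮ) y
    rwa [Submodule.orthogonal_orthogonal] at h
  have hQ0 : ∀ y ∈ S, Q y = 0 := fun y hy => by
    rw [hQapp]
    rw [show (0 : Y) = ((0 : Sᗮ) : Y) by rfl]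
    congr 1
    exact Submodule.orthogonalProjectionOnto_apply_of_mem_orthogonal
      (S.le_orthogonal_orthogonal hy)
  have hGmem : ∀ y, G y ∈ T := fun y => hGr ▸ LinearMap.mem_range_self G.toLinearMap y
  have hG0 : ∀ y ∈ S, G y = 0 := fun y hy => by
    rw [← hGk] at hy; exact hy
  -- G ∘ Q = G pointwise
  have eGQ : ∀ y, G (Q y) = G y := fun y => by
    have h := hG0 _ (hsubS y)
    rw [map_sub] at h
    exact (sub_eq_zero.mp h).symm
  -- key operator identities
  have eGM : G ∘L M = P := by
    ext x
    show G (Q (A (P x))) = P x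
    rw [eGQ]
    obtain ⟨y, hy⟩ : ∃ y, G y = P x := by
      have : P x ∈ LinearMap.range (G : Y →ₗ[ℂ] X) := hGr.symm ▸ (hPapp x ▸ (T.orthogonalProjectionOnto x).2)
      exact this
    rw [← hy]
    exact DFunLike.congr_fun hGAG y
  have eMG : M ∘L G = Q := by
    ext y
    show Q (A (P (G y))) = Q y
    rw [hPT _ (hGmem y)]
    have hmem : A (G y) - y ∈ S := by
      rw [← hGk]
      simp only [LinearMap.mem_ker]
      have := DFunLike.congr_fun hGAG y
      simp only [comp_apply] at this
      simp [map_sub, this]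
    have := hQ0 _ hmem
    rw [map_sub] at this
    have := sub_eq_zero.mp this
    exact this
  have ePG : P ∘L G = G := by ext y; exact hPT _ (hGmem y)
  have eQM : Q ∘L M = M := by
    ext x
    show Q (Q (A (P x))) = Q (A (P x))
    exact hQS _ (hQapp (A (P x)) ▸ (Sᗮ.orthogonalProjectionOnto (A (P x))).2)
  have ePsa : adjoint P = P := (isSelfAdjoint_starProjection T).adjoint_eq
  have eQsa : adjoint Q = Q := (isSelfAdjoint_starProjection Sᗮ).adjoint_eq
  -- G is a Moore-Penrose inverse of M
  have g1 : M ∘L (G ∘L M) = M := by rw [← comp_assoc, eMG, eQM]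
  have g2 : G ∘L (M ∘L G) = G := by rw [← comp_assoc, eGM, ePG]
  have g3 : adjoint (M ∘L G) = M ∘L G := by rw [eMG, eQsa]
  have g4 : adjoint (G ∘L M) = G ∘L M := by rw [eGM, ePsa]
  -- uniqueness of the Moore-Penrose inverse
  have hb1 : ∀ x, M (B (M x)) = M x := fun x => by
    have := DFunLike.congr_fun b1 x
    simpa using this
  have hMB : M ∘L B = M ∘L G := by
    have hMad : adjoint M = adjoint M ∘L (M ∘L G) := by
      conv_lhs => rw [← g1, ← comp_assoc, adjoint_comp, g3]
    calc M ∘L B = adjoint (M ∘L B) := b3.symm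
      _ = adjoint B ∘L adjoint M := adjoint_comp _ _
      _ = adjoint B ∘L (adjoint M ∘L (M ∘L G)) := by rw [← hMad]
      _ = (adjoint B ∘L adjoint M) ∘L (M ∘L G) := by ext x; rfl
      _ = adjoint (M ∘L B) ∘L (M ∘L G) := by rw [← adjoint_comp]
      _ = (M ∘L B) ∘L (M ∘L G) := by rw [b3]
      _ = M ∘L G := by
            ext x
            simp only [comp_apply]
            exact hb1 (G x)
  have hBM : B ∘L M = G ∘L M := by
    have hMad : adjoint M = (G ∘L M) ∘L adjoint M := by
      conv_lhs => rw [← g1, adjoint_comp, g4]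
    calc B ∘L M = adjoint (B ∘L M) := b4.symm
      _ = adjoint M ∘L adjoint B := adjoint_comp _ _
      _ = ((G ∘L M) ∘L adjoint M) ∘L adjoint B := by rw [← hMad]
      _ = (G ∘L M) ∘L (adjoint M ∘L adjoint B) := by ext x; rfl
      _ = (G ∘L M) ∘L adjoint (B ∘L M) := by rw [← adjoint_comp]
      _ = (G ∘L M) ∘L (B ∘L M) := by rw [b4]
      _ = G ∘L M := by
            ext x
            simp only [comp_apply]
            exact congrArg G (hb1 x)
  have hGB : G = B := by
    calc G = G ∘L (M ∘L G) := g2.symm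
      _ = G ∘L (M ∘L B) := by rw [hMB]
      _ = (G ∘L M) ∘L B := by ext x; rfl
      _ = (B ∘L M) ∘L B := by rw [hBM]
      _ = B ∘L (M ∘L B) := by ext x; rfl
      _ = B := b2
  exact ⟨hGB, hGB ▸ hGr, hGB ▸ hGk⟩
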